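/- Let n ≥ 1, let Φ₁ be any real n×n matrix, and let Φ₂ be a real symmetric positive definite n×n matrix. Then Tr(Φ₂) · Tr(Φ₁ᵀ Φ₂⁻¹ Φ₁) ≥ (Tr Φ₁)² / n. -/

import Mathlib

open Matrix
open scoped MatrixOrder

private lemma trace_transpose_mul_eq {n : ℕ} (A B : Matrix (Fin n) (Fin n) ℝ) :
    (Aᵀ * B).trace = ∑ p : Fin n × Fin n, A p.1 p.2 * B p.1 p.2 := by
  rw [Fintype.sum_prod_type]
  simp [Matrix.trace, Matrix.mul_apply, Matrix.diag]
  rw [Finset.sum_comm]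

private lemma frob_cauchy_schwarz {n : ℕ} (A B : Matrix (Fin n) (Fin n) ℝ) :
    ((Aᵀ * B).trace) ^ 2 ≤ (Aᵀ * A).trace * (Bᵀ * B).trace := by
  rw [trace_transpose_mul_eq, trace_transpose_mul_eq, trace_transpose_mul_eq]
  simpa [sq] using Finset.sum_mul_sq_le_sq_mul_sq Finset.univ
    (fun p : Fin n × Fin n => A p.1 p.2) (fun p => B p.1 p.2)

/-- For Φ₁ arbitrary and Φ₂ symmetric positive definite,
`Tr(Φ₂) · Tr(Φ₁ᵀ Φ₂⁻¹ Φ₁) ≥ (Tr Φ₁)² / n`. -/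
theorem trace_inv_trace_lower_bound {n : ℕ} (hn : 1 ≤ n)
    (Φ₁ Φ₂ : Matrix (Fin n) (Fin n) ℝ) (hΦ₂ : Φ₂.PosDef) :
    (Φ₁.trace) ^ 2 / n ≤ Φ₂.trace * (Φ₁ᵀ * Φ₂⁻¹ * Φ₁).trace := by
  set S := CFC.sqrt Φ₂ with hSdef
  have hSsymm : Sᵀ = S := (CFC.sqrt_nonneg Φ₂).posSemidef.isHermitian.eq
  have hSS : S * S = Φ₂ := CFC.sqrt_mul_sqrt_self Φ₂ hΦ₂.posSemidef.nonneg
  have hdet : IsUnit S.det := by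
    have : S.det * S.det = Φ₂.det := by rw [← Matrix.det_mul, hSS]
    have h2 : S.det ≠ 0 := by
      intro h
      have hd := hΦ₂.det_pos
      rw [← this, h, mul_zero] at hd
      exact lt_irrefl _ hd
    exact h2.isUnit
  have hSinv : S * S⁻¹ = 1 := Matrix.mul_nonsing_inv S hdet
  have hSinvT : (S⁻¹)ᵀ = S⁻¹ := by
    rw [Matrix.transpose_nonsing_inv, hSsymm]
  have hΦ₂inv : Φ₂⁻¹ = S⁻¹ * S⁻¹ := by
    rw [← hSS, Matrix.mul_inv_rev]
  have key := frob_cauchy_schwarz S (S⁻¹ * Φ₁)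
  have h1 : (Sᵀ * (S⁻¹ * Φ₁)).trace = Φ₁.trace := by
    rw [hSsymm, ← Matrix.mul_assoc, hSinv, Matrix.one_mul]
  have h2 : (Sᵀ * S).trace = Φ₂.trace := by rw [hSsymm, hSS]
  have h3 : ((S⁻¹ * Φ₁)ᵀ * (S⁻¹ * Φ₁)).trace = (Φ₁ᵀ * Φ₂⁻¹ * Φ₁).trace := by
    rw [Matrix.transpose_mul, hSinvT, hΦ₂inv]
    simp [Matrix.mul_assoc]
  rw [h1, h2, h3] at key
  have hn' : (1 : ℝ) ≤ n := by exact_mod_cast hn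
  calc (Φ₁.trace) ^ 2 / n ≤ (Φ₁.trace) ^ 2 := div_le_self (sq_nonneg _) hn'
    _ ≤ _ := key
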